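/- Let p > c > 0 and μ, σ > 0 with κ = (p−c)/p ≥ σ²/(μ²+σ²) and κ ≥ 1/2. For fixed α > 0, the function σ ↦ q_α(σ), where q_α(σ) = μ + σ f(1−κ) − p/(4α) if σ ≤ (μ − p/(2α))√(κ/(1−κ)), and q_α(σ) = (μ² − σ² + 2μσ f(1−κ))·α/p otherwise, is decreasing on the interval [max{(μ−p/(2α))√(κ/(1−κ)), μ f(1−κ)}, μ√(κ/(1−κ))], where f(x) = (1−2x)/(2√(x(1−x))). -/

import Mathlib

noncomputable def scarfF (x : ℝ) : ℝ := (1 - 2 * x) / (2 * Real.sqrt (x * (1 - x)))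

/-- Sensitivity to variance: for κ ≥ 1/2, the misspecification-averse optimal
order quantity, viewed as a function of σ, is decreasing on the tail of the
non-degenerate range [max{(μ−p/(2α))√(κ/(1−κ)), μ f(1−κ)}, μ√(κ/(1−κ))]. -/
theorem stmt_9 (p c μ α κ : ℝ) (hc : 0 < c) (hcp : c < p) (hμ : 0 < μ) (hα : 0 < α)
    (hκ : κ = (p - c) / p) (hhalf : 1 / 2 ≤ κ) :
    let g : ℝ → ℝ := fun σ =>
      if σ ≤ (μ - p / (2 * α)) * Real.sqrt (κ / (1 - κ)) then
        μ + σ * scarfF (1 - κ) - p / (4 * α)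
      else (μ ^ 2 - σ ^ 2 + 2 * μ * σ * scarfF (1 - κ)) * α / p
    AntitoneOn g (Set.Icc
      (max ((μ - p / (2 * α)) * Real.sqrt (κ / (1 - κ))) (μ * scarfF (1 - κ)))
      (μ * Real.sqrt (κ / (1 - κ)))) := by
  have hp : 0 < p := hc.trans hcp
  have hκ1 : κ < 1 := by
    rw [hκ]; rw [div_lt_one hp]; linarith
  have h1κ : 0 < 1 - κ := by linarith
  set s : ℝ := Real.sqrt (κ / (1 - κ)) with hsdef
  have hκpos : 0 < κ := by linarith
  have hs2 : s ^ 2 = κ / (1 - κ) := Real.sq_sqrt (by positivity)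
  have hs0 : 0 ≤ s := Real.sqrt_nonneg _
  have hs1 : 1 ≤ s := by
    have h : (1:ℝ) ≤ κ / (1 - κ) := (one_le_div h1κ).mpr (by linarith)
    nlinarith [hs2]
  have hspos : 0 < s := lt_of_lt_of_le one_pos hs1
  have hs2' : s ^ 2 * (1 - κ) = κ := by
    rw [hs2]; field_simp
  have hsqrt : Real.sqrt ((1 - κ) * (1 - (1 - κ))) = s * (1 - κ) := by
    have : (1 - κ) * (1 - (1 - κ)) = (s * (1 - κ)) ^ 2 := by nlinarith [hs2']
    rw [this, Real.sqrt_sq (by positivity)]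
  set f : ℝ := scarfF (1 - κ) with hfdef
  have hf : f = (2 * κ - 1) / (2 * (s * (1 - κ))) := by
    rw [hfdef, scarfF, hsqrt]; ring_nf
  have hfnn : 0 ≤ f := by
    rw [hf]; exact div_nonneg (by linarith) (by positivity)
  have hfs : 2 * f * s = s ^ 2 - 1 := by
    rw [hf]
    field_simp
    nlinarith [hs2']
  intro g x hx y hy hxy
  simp only [Set.mem_Icc, max_le_iff] at hx hy
  obtain ⟨⟨hxA, hxf⟩, hxs⟩ := hx
  obtain ⟨⟨hyA, hyf⟩, hys⟩ := hy
  show (if y ≤ (μ - p / (2 * α)) * s then μ + y * f - p / (4 * α)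
      else (μ ^ 2 - y ^ 2 + 2 * μ * y * f) * α / p) ≤
    (if x ≤ (μ - p / (2 * α)) * s then μ + x * f - p / (4 * α)
      else (μ ^ 2 - x ^ 2 + 2 * μ * x * f) * α / p)
  set t : ℝ := p / (2 * α) with htdef
  have htpos : 0 < t := by rw [htdef]; positivity
  have hpt : p = 2 * α * t := by rw [htdef]; field_simp
  set A : ℝ := (μ - t) * s with hAdef
  -- key: at the junction point the two branches agree
  have hjunction : μ + A * f - p / (4 * α) = (μ ^ 2 - A ^ 2 + 2 * μ * A * f) * α / p := by
    rw [hAdef, hpt]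
    field_simp
    linear_combination (-(4:ℝ)*(μ-t)^2) * hfs
  -- monotone comparison for quadratic branch
  have hquad : ∀ u v : ℝ, μ * f ≤ u → u ≤ v →
      (μ ^ 2 - v ^ 2 + 2 * μ * v * f) * α / p ≤ (μ ^ 2 - u ^ 2 + 2 * μ * u * f) * α / p := by
    intro u v hu huv
    rw [mul_div_assoc, mul_div_assoc]
    apply mul_le_mul_of_nonneg_right _ (by positivity)
    nlinarith [mul_nonneg (sub_nonneg.mpr huv) (by linarith : (0:ℝ) ≤ u + v - 2 * (μ * f))]
  split_ifs with h1 h2 h2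
  · -- both ≤ A : then x = A and y = A
    have hxe : x = A := le_antisymm h2 hxA
    have hye : y = A := le_antisymm h1 hyA
    exact le_of_eq (by rw [hxe, hye])
  · -- y ≤ A, x > A : impossible since x ≤ y
    exact absurd (hxy.trans h1) h2
  · -- x ≤ A < y : x = A, use junction equality
    have hxe : x = A := le_antisymm h2 hxA
    rw [hxe, hjunction]
    exact hquad A y (hxe ▸ hxf) (hxe ▸ hxy)
  · exact hquad x y hxf hxy
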